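/- Given pairwise disjoint closed cubes C₁,…,Cₙ ⊂ (0,1)^d with affine homeomorphisms Tⱼ : K → Cⱼ and any continuous g : Kⁿ → ℝ, there exists a continuous permutation-invariant function f : Kⁿ → ℝ such that f(T₁t₁,…,Tₙtₙ) = g(t₁,…,tₙ) for all (t₁,…,tₙ) ∈ Kⁿ. -/
import Mathlib


/-- The unit cube `[0,1]^d` in `ℝ^d`. -/
def unitCube (d : ℕ) : Set (Fin d → ℝ) := {x | ∀ i, x i ∈ Set.Icc (0 : ℝ) 1}

lemma unitCube_eq (d : ℕ) : unitCube d = Set.pi Set.univ (fun _ : Fin d => Set.Icc (0:ℝ) 1) := by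
  ext x
  simp only [unitCube, Set.mem_setOf_eq, Set.mem_univ_pi]

instance (d : ℕ) : CompactSpace (unitCube d) := by
  rw [show unitCube d = Set.pi Set.univ (fun _ : Fin d => Set.Icc (0:ℝ) 1) from unitCube_eq d]
  exact isCompact_iff_compactSpace.mp (isCompact_univ_pi fun _ => isCompact_Icc)

/-- given pairwise disjoint closed cubes `C j ⊂ (0,1)^d` with
(affine) homeomorphic parametrizations `T j : K → C j` and any continuous `g` on
`Kⁿ`, there is a continuous permutation-invariant `f` with
`f(T₁t₁,…,Tₙtₙ) = g(t₁,…,tₙ)`. -/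
theorem stmt_13 (d n : ℕ)
    (C : Fin n → Set (Fin d → ℝ))
    (hclosed : ∀ j, IsClosed (C j))
    (hsub : ∀ j, C j ⊆ {x | ∀ i, x i ∈ Set.Ioo (0 : ℝ) 1})
    (hdisj : ∀ i j, i ≠ j → Disjoint (C i) (C j))
    (T : Fin n → unitCube d → (Fin d → ℝ))
    (hTc : ∀ j, Continuous (T j))
    (hTC : ∀ j t, T j t ∈ C j)
    (hTinj : ∀ j, Function.Injective (T j))
    (g : (Fin n → unitCube d) → ℝ) (hg : Continuous g) :
    ∃ f : (Fin n → unitCube d) → ℝ, Continuous f ∧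
      (∀ (σ : Equiv.Perm (Fin n)) (x : Fin n → unitCube d), f (fun i => x (σ i)) = f x) ∧
      ∀ (t x : Fin n → unitCube d), (∀ j, (x j : Fin d → ℝ) = T j (t j)) → f x = g t := by
  classical
  -- membership of T j t in the unit cube
  have hmem : ∀ (j : Fin n) (s : unitCube d), T j s ∈ unitCube d := by
    intro j s i
    exact Set.Ioo_subset_Icc_self (hsub j (hTC j s) i)
  -- the embedding Φ
  set Φ : (Fin n → unitCube d) → (Fin n → unitCube d) := fun t j => ⟨T j (t j), hmem j (t j)⟩ with hΦ
  have hΦc : Continuous Φ := by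
    refine continuous_pi fun j => Continuous.subtype_mk ?_ _
    exact (hTc j).comp (continuous_apply j)
  have hΦinj : Function.Injective Φ := by
    intro t s h
    funext j
    have := congrFun h j
    exact hTinj j (by simpa [hΦ, Subtype.ext_iff] using this)
  have hΦemb : Topology.IsClosedEmbedding Φ := hΦc.isClosedEmbedding hΦinj
  -- Tietze extension of g along Φ
  obtain ⟨H, hH⟩ := ContinuousMap.exists_extension (Y := ℝ) hΦemb ⟨g, hg⟩
  have hHΦ : ∀ t : Fin n → unitCube d, H (Φ t) = g t := fun t => DFunLike.congr_fun hH t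
  -- the "wrong copies" set
  set S : Equiv.Perm (Fin n) → Set (Fin n → unitCube d) := fun σ => {x | ∀ j, (x j : Fin d → ℝ) ∈ C (σ j)} with hS
  have hSclosed : ∀ σ, IsClosed (S σ) := by
    intro σ
    have : S σ = ⋂ j, (fun x : Fin n → unitCube d => (x j : Fin d → ℝ)) ⁻¹' C (σ j) := by
      ext x; simp [hS]
    rw [this]
    exact isClosed_iInter fun j =>
      (hclosed (σ j)).preimage (continuous_subtype_val.comp (continuous_apply j))
  set B : Set (Fin n → unitCube d) := ⋃ σ : {σ : Equiv.Perm (Fin n) // σ ≠ 1}, S σ.1 with hB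
  have hBclosed : IsClosed B := isClosed_iUnion_of_finite fun σ => hSclosed σ.1
  have hAclosed : IsClosed (Set.range Φ) := hΦemb.isClosed_range
  have hABdisj : Disjoint (Set.range Φ) B := by
    rw [Set.disjoint_left]
    rintro x ⟨t, rfl⟩ hxB
    obtain ⟨⟨σ, hσ⟩, hxS⟩ := Set.mem_iUnion.mp hxB
    have : ∃ j, σ j ≠ j := by
      by_contra h
      push_neg at h
      exact hσ (Equiv.ext h)
    obtain ⟨j, hj⟩ := this
    have h1 : (Φ t j : Fin d → ℝ) ∈ C j := hTC j (t j)
    have h2 : (Φ t j : Fin d → ℝ) ∈ C (σ j) := hxS j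
    exact Set.disjoint_left.mp (hdisj (σ j) j hj) h2 h1
  -- Urysohn function
  obtain ⟨χ, hχB, hχA, hχ01⟩ :=
    exists_continuous_zero_one_of_isClosed hBclosed hAclosed hABdisj.symm
  -- the action
  set act : Equiv.Perm (Fin n) → (Fin n → unitCube d) → (Fin n → unitCube d) := fun σ x => fun i => x (σ i) with hact
  have hactc : ∀ σ, Continuous (act σ) := fun σ => continuous_pi fun i => continuous_apply (σ i)
  have hactmul : ∀ σ π x, act π (act σ x) = act (σ * π) x := by
    intro σ π x; rfl
  -- the function
  set F : (Fin n → unitCube d) → ℝ := fun x => H x * χ x with hF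
  have hFc : Continuous F := H.continuous.mul χ.continuous
  refine ⟨fun x => ∑ σ : Equiv.Perm (Fin n), F (act σ x), ?_, ?_, ?_⟩
  · exact continuous_finset_sum _ fun σ _ => hFc.comp (hactc σ)
  · intro σ x
    have : (fun i => x (σ i)) = act σ x := rfl
    rw [this]
    refine Fintype.sum_equiv (Equiv.mulLeft σ) _ _ fun π => ?_
    simp [hactmul]
  · intro t x hx
    have hxΦ : x = Φ t := by
      funext j; exact Subtype.ext (hx j)
    subst hxΦ
    show ∑ σ : Equiv.Perm (Fin n), F (act σ (Φ t)) = g t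
    rw [Finset.sum_eq_single (1 : Equiv.Perm (Fin n))]
    · have hid : act 1 (Φ t) = Φ t := rfl
      rw [hid]
      show H (Φ t) * χ (Φ t) = g t
      have hχ1 : χ (Φ t) = 1 := hχA ⟨t, rfl⟩
      rw [hχ1, hHΦ, mul_one]
    · intro σ _ hσ
      have hmemS : act σ (Φ t) ∈ S σ := by
        intro j
        exact hTC (σ j) (t (σ j))
      have : act σ (Φ t) ∈ B := Set.mem_iUnion.mpr ⟨⟨σ, hσ⟩, hmemS⟩
      have hχ0 : χ (act σ (Φ t)) = 0 := hχB this
      simp [hF, hχ0]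
    · intro h; exact absurd (Finset.mem_univ _) h
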